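/- In linear regression transfer learning with Gaussian data, the regret equals R(S,T) = ‖Σ_{T,X}^{1/2}(w_T − w_S)‖₂² + [μ_{T,Y} − μ_{S,Y} − Σ_{S,YX}Σ_{S,X}^{-1}(μ_{T,X} − μ_{S,X})]². -/

import Mathlib

open MeasureTheory ProbabilityTheory Matrix
open scoped NNReal

/-- The positive semidefinite square root (removed from Mathlib; restored with its old definition). -/
noncomputable def Matrix.PosSemidef.sqrt {n : Type*} [Fintype n] [DecidableEq n]
    {A : Matrix n n ℝ} (hA : A.PosSemidef) : Matrix n n ℝ :=
  (hA.1.eigenvectorUnitary : Matrix n n ℝ) * diagonal ((↑) ∘ Real.sqrt ∘ hA.1.eigenvalues) *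
    (star hA.1.eigenvectorUnitary : Matrix n n ℝ)

lemma Matrix.PosSemidef.sqrt_isHermitian {n : Type*} [Fintype n] [DecidableEq n]
    {A : Matrix n n ℝ} (hA : A.PosSemidef) : hA.sqrt.IsHermitian := by
  unfold Matrix.PosSemidef.sqrt
  rw [IsHermitian, conjTranspose_mul, conjTranspose_mul, diagonal_conjTranspose]
  simp [Matrix.star_eq_conjTranspose, mul_assoc]

lemma Matrix.PosSemidef.sqrt_mul_self {n : Type*} [Fintype n] [DecidableEq n]
    {A : Matrix n n ℝ} (hA : A.PosSemidef) : hA.sqrt * hA.sqrt = A := by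
  unfold Matrix.PosSemidef.sqrt
  have hU := Unitary.coe_star_mul_self hA.1.eigenvectorUnitary
  have hD : diagonal ((↑) ∘ Real.sqrt ∘ hA.1.eigenvalues) *
      diagonal ((↑) ∘ Real.sqrt ∘ hA.1.eigenvalues) =
      diagonal (RCLike.ofReal ∘ hA.1.eigenvalues : n → ℝ) := by
    rw [diagonal_mul_diagonal]
    congr 1; funext i
    simp [Real.mul_self_sqrt (hA.eigenvalues_nonneg i)]
  conv_rhs => rw [hA.1.spectral_theorem]
  rw [Unitary.conjStarAlgAut_apply, ← hD]
  simp only [mul_assoc]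
  rw [← mul_assoc (star (hA.1.eigenvectorUnitary : Matrix n n ℝ)) (hA.1.eigenvectorUnitary : Matrix n n ℝ), hU, one_mul]

/-- The multivariate Gaussian measure `N(μ, S)` on `ℝ^n`. -/
noncomputable def multiGaussian {n : ℕ} (μ : Fin n → ℝ) (S : Matrix (Fin n) (Fin n) ℝ)
    (hS : S.PosSemidef) : Measure (Fin n → ℝ) :=
  (Measure.pi fun _ : Fin n => gaussianReal 0 1).map fun z => μ + hS.sqrt.mulVec z

section RegretAux
open Real
open scoped ENNReal


lemma gauss_withDensity :
    gaussianReal 0 1 = volume.withDensity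
      (fun x => ((gaussianPDFReal 0 1 x).toNNReal : ℝ≥0∞)) := by
  rw [gaussianReal_of_var_ne_zero _ one_ne_zero]
  rfl

lemma integral_gauss_eq (g : ℝ → ℝ) :
    ∫ x, g x ∂(gaussianReal 0 1) = ∫ x, gaussianPDFReal 0 1 x * g x := by
  rw [gauss_withDensity, integral_withDensity_eq_integral_smul
    ((measurable_gaussianPDFReal 0 1).real_toNNReal) g]
  congr 1; funext x
  simp [NNReal.smul_def, Real.coe_toNNReal _ (gaussianPDFReal_nonneg 0 1 x)]

lemma integrable_gauss_iff (g : ℝ → ℝ) :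
    Integrable g (gaussianReal 0 1) ↔
      Integrable (fun x => gaussianPDFReal 0 1 x * g x) := by
  rw [gauss_withDensity, integrable_withDensity_iff_integrable_smul
    ((measurable_gaussianPDFReal 0 1).real_toNNReal)]
  constructor <;> intro h <;> refine h.congr (Filter.Eventually.of_forall fun x => ?_) <;>
    simp [NNReal.smul_def, Real.coe_toNNReal _ (gaussianPDFReal_nonneg 0 1 x)]

lemma gaussianPDFReal_zero_one (x : ℝ) :
    gaussianPDFReal 0 1 x = (Real.sqrt (2 * π))⁻¹ * Real.exp (-(1/2) * x ^ 2) := by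
  simp only [gaussianPDFReal, NNReal.coe_one, mul_one, sub_zero]
  ring_nf

lemma int_exp_sq : Integrable (fun x : ℝ => x ^ 2 * Real.exp (-(1/2) * x ^ 2)) := by
  have h := integrable_rpow_mul_exp_neg_mul_sq (b := 1/2) (by norm_num) (s := 2) (by norm_num)
  have h2 : ∀ x : ℝ, x ^ (2:ℝ) = x ^ 2 := fun x => by
    rw [← Real.rpow_natCast x 2]; norm_num
  refine h.congr (Filter.Eventually.of_forall fun x => ?_)
  simp only [h2]

lemma int_exp_id : Integrable (fun x : ℝ => x * Real.exp (-(1/2) * x ^ 2)) :=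
  integrable_mul_exp_neg_mul_sq (b := 1/2) (by norm_num)

lemma int_exp : Integrable (fun x : ℝ => Real.exp (-(1/2) * x ^ 2)) :=
  integrable_exp_neg_mul_sq (b := 1/2) (by norm_num)

lemma integral_id_exp : ∫ x : ℝ, x * Real.exp (-(1/2) * x ^ 2) = 0 := by
  have h : ∫ x : ℝ, (-x) * Real.exp (-(1/2) * (-x) ^ 2) = ∫ x : ℝ, x * Real.exp (-(1/2) * x ^ 2) :=
    integral_neg_eq_self (fun x : ℝ => x * Real.exp (-(1/2) * x ^ 2)) volume
  simp only [neg_sq] at h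
  have h2 : ∫ x : ℝ, -x * Real.exp (-(1/2) * x ^ 2) = - ∫ x : ℝ, x * Real.exp (-(1/2) * x ^ 2) := by
    rw [← integral_neg]; congr 1; funext x; ring
  rw [h2] at h; linarith

lemma integral_sq_exp : ∫ x : ℝ, x ^ 2 * Real.exp (-(1/2) * x ^ 2) = Real.sqrt (2 * π) := by
  have habs : ∫ x : ℝ, x ^ 2 * Real.exp (-(1/2) * x ^ 2)
      = 2 * ∫ x in Set.Ioi (0:ℝ), x ^ 2 * Real.exp (-(1/2) * x ^ 2) := by
    rw [← integral_comp_abs (f := fun x => x ^ 2 * Real.exp (-(1/2) * x ^ 2))]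
    congr 1; funext x; rw [sq_abs]
  have hIoi : ∫ x in Set.Ioi (0:ℝ), x ^ 2 * Real.exp (-(1/2) * x ^ 2)
      = ((1:ℝ)/2) ^ (-(2 + 1) / 2 : ℝ) * (1 / 2) * Real.Gamma ((2 + 1) / 2) := by
    rw [← integral_rpow_mul_exp_neg_mul_rpow (p := 2) (q := 2) (b := 1/2) (by norm_num)
      (by norm_num) (by norm_num)]
    have h2 : ∀ x : ℝ, x ^ (2:ℝ) = x ^ 2 := fun x => by
      rw [← Real.rpow_natCast x 2]; norm_num
    refine setIntegral_congr_fun measurableSet_Ioi (fun x _ => ?_)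
    simp only [h2]
  have hGamma : Real.Gamma ((2 + 1) / 2) = Real.sqrt π / 2 := by
    rw [show ((2:ℝ) + 1) / 2 = 1/2 + 1 by norm_num, Real.Gamma_add_one (by norm_num),
      Real.Gamma_one_half_eq]
    ring
  have hpow : ((1:ℝ)/2) ^ (-(2 + 1) / 2 : ℝ) = 2 * Real.sqrt 2 := by
    rw [show ((1:ℝ)/2) = 2⁻¹ by norm_num, Real.inv_rpow (by norm_num),
      ← Real.rpow_neg (by norm_num)]
    rw [show (-(-(2 + 1) / 2) : ℝ) = 1 + 1/2 by norm_num, Real.rpow_add (by norm_num),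
      Real.rpow_one, ← Real.sqrt_eq_rpow]
  rw [habs, hIoi, hGamma, hpow, Real.sqrt_mul (by norm_num)]
  ring

lemma gauss_integrable_id : Integrable (fun x : ℝ => x) (gaussianReal 0 1) := by
  rw [integrable_gauss_iff]
  have := int_exp_id.const_mul (Real.sqrt (2 * π))⁻¹
  refine this.congr (Filter.Eventually.of_forall fun x => ?_)
  simp only [gaussianPDFReal_zero_one]; ring

lemma gauss_integrable_sq : Integrable (fun x : ℝ => x ^ 2) (gaussianReal 0 1) := by
  rw [integrable_gauss_iff]
  have := int_exp_sq.const_mul (Real.sqrt (2 * π))⁻¹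
  refine this.congr (Filter.Eventually.of_forall fun x => ?_)
  simp only [gaussianPDFReal_zero_one]; ring

lemma gauss_integral_id : ∫ x, x ∂(gaussianReal 0 1) = 0 := by
  rw [integral_gauss_eq]
  have : ∀ x : ℝ, gaussianPDFReal 0 1 x * x
      = (Real.sqrt (2 * π))⁻¹ * (x * Real.exp (-(1/2) * x ^ 2)) := fun x => by
    rw [gaussianPDFReal_zero_one]; ring
  simp only [this, integral_const_mul, integral_id_exp, mul_zero]

lemma gauss_integral_sq : ∫ x, x ^ 2 ∂(gaussianReal 0 1) = 1 := by
  rw [integral_gauss_eq]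
  have : ∀ x : ℝ, gaussianPDFReal 0 1 x * x ^ 2
      = (Real.sqrt (2 * π))⁻¹ * (x ^ 2 * Real.exp (-(1/2) * x ^ 2)) := fun x => by
    rw [gaussianPDFReal_zero_one]; ring
  simp only [this, integral_const_mul, integral_sq_exp]
  rw [inv_mul_cancel₀]
  positivity

section Pi
variable {n : ℕ}

lemma pi_integral_prod (f : Fin n → ℝ → ℝ) :
    ∫ z, ∏ i, f i (z i) ∂(Measure.pi fun _ : Fin n => gaussianReal 0 1)
      = ∏ i, ∫ x, f i x ∂(gaussianReal 0 1) := by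
  letI : MeasureSpace ℝ := ⟨gaussianReal 0 1⟩
  haveI : SigmaFinite (volume : Measure ℝ) := inferInstanceAs (SigmaFinite (gaussianReal 0 1))
  exact MeasureTheory.integral_fin_nat_prod_eq_prod f

lemma pi_integrable_prod (f : Fin n → ℝ → ℝ) (hf : ∀ i, Integrable (f i) (gaussianReal 0 1)) :
    Integrable (fun z => ∏ i, f i (z i)) (Measure.pi fun _ : Fin n => gaussianReal 0 1) := by
  letI : MeasureSpace ℝ := ⟨gaussianReal 0 1⟩
  haveI : SigmaFinite (volume : Measure ℝ) := inferInstanceAs (SigmaFinite (gaussianReal 0 1))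
  exact Integrable.fintype_prod_dep hf

noncomputable def gk (i j k : Fin n) (x : ℝ) : ℝ :=
  (if k = i then x else 1) * (if k = j then x else 1)

lemma prod_gk (i j : Fin n) (z : Fin n → ℝ) : ∏ k, gk i j k (z k) = z i * z j := by
  unfold gk
  rw [Finset.prod_mul_distrib]
  simp [Finset.prod_ite_eq']

lemma integrable_gk (i j k : Fin n) : Integrable (gk i j k) (gaussianReal 0 1) := by
  unfold gk
  rcases eq_or_ne k i with rfl | hi <;> rcases eq_or_ne k j with rfl | hj
  · simp only [if_pos rfl]
    exact gauss_integrable_sq.congr (Filter.Eventually.of_forall fun x => by simpa using pow_two x)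
  · simpa [hj] using gauss_integrable_id
  · simpa [hi] using gauss_integrable_id
  · simpa [hi, hj] using (integrable_const (1:ℝ))

lemma integral_gk (i j k : Fin n) : ∫ x, gk i j k x ∂(gaussianReal 0 1)
    = if k = i ∧ k = j then 1 else if k = i ∨ k = j then 0 else 1 := by
  unfold gk
  rcases eq_or_ne k i with rfl | hi <;> rcases eq_or_ne k j with rfl | hj
  · simp only [if_pos rfl, and_self, ite_true]
    calc ∫ x, x * x ∂(gaussianReal 0 1) = ∫ x, x ^ 2 ∂(gaussianReal 0 1) := by
          congr 1; funext x; ring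
      _ = 1 := gauss_integral_sq
  · simp only [if_pos rfl, if_neg hj, hj, and_false, true_or, ite_true, ite_false, mul_one]
    exact gauss_integral_id
  · simp only [if_pos rfl, if_neg hi, hi, false_and, or_true, ite_true, ite_false, one_mul]
    exact gauss_integral_id
  · simp [hi, hj]

lemma pi_integrable_mul (i j : Fin n) :
    Integrable (fun z => z i * z j) (Measure.pi fun _ : Fin n => gaussianReal 0 1) :=
  (pi_integrable_prod (gk i j) (integrable_gk i j)).congr
    (Filter.Eventually.of_forall fun z => prod_gk i j z)

lemma pi_integral_mul (i j : Fin n) :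
    ∫ z, z i * z j ∂(Measure.pi fun _ : Fin n => gaussianReal 0 1)
      = if i = j then 1 else 0 := by
  rw [show (fun z : Fin n → ℝ => z i * z j) = fun z => ∏ k, gk i j k (z k) from
    funext fun z => (prod_gk i j z).symm]
  rw [pi_integral_prod]
  by_cases hij : i = j
  · subst hij
    rw [if_pos rfl]
    refine Finset.prod_eq_one fun k _ => ?_
    rw [integral_gk]
    by_cases hk : k = i <;> simp [hk]
  · rw [if_neg hij, Finset.prod_eq_zero (Finset.mem_univ i)]
    rw [integral_gk]
    simp [hij]

noncomputable def hk (i k : Fin n) (x : ℝ) : ℝ := if k = i then x else 1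

lemma prod_hk (i : Fin n) (z : Fin n → ℝ) : ∏ k, hk i k (z k) = z i := by
  unfold hk; simp [Finset.prod_ite_eq']

lemma integrable_hk (i k : Fin n) : Integrable (hk i k) (gaussianReal 0 1) := by
  unfold hk
  rcases eq_or_ne k i with rfl | hi
  · simpa using gauss_integrable_id
  · simpa [hi] using (integrable_const (1:ℝ))

lemma pi_integrable_single (i : Fin n) :
    Integrable (fun z => z i) (Measure.pi fun _ : Fin n => gaussianReal 0 1) :=
  (pi_integrable_prod (hk i) (integrable_hk i)).congr
    (Filter.Eventually.of_forall fun z => prod_hk i z)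

lemma pi_integral_single (i : Fin n) :
    ∫ z, z i ∂(Measure.pi fun _ : Fin n => gaussianReal 0 1) = 0 := by
  rw [show (fun z : Fin n → ℝ => z i) = fun z => ∏ k, hk i k (z k) from
    funext fun z => (prod_hk i z).symm]
  rw [pi_integral_prod, Finset.prod_eq_zero (Finset.mem_univ i)]
  unfold hk
  simpa using gauss_integral_id
end Pi

lemma integral_dot_add_sq {n : ℕ} (u : Fin n → ℝ) (m : ℝ) :
    ∫ z, (u ⬝ᵥ z + m) ^ 2 ∂(Measure.pi fun _ : Fin n => gaussianReal 0 1)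
      = u ⬝ᵥ u + m ^ 2 := by
  set PP := Measure.pi fun _ : Fin n => gaussianReal 0 1 with hPP
  have hexp : ∀ z : Fin n → ℝ, (u ⬝ᵥ z + m) ^ 2
      = (∑ i, ∑ j, (u i * u j) * (z i * z j)) + ((∑ i, (2 * m * u i) * z i) + m ^ 2) := by
    intro z
    have e2 : (∑ i, u i * z i) * (∑ j, u j * z j) = ∑ i, ∑ j, (u i * u j) * (z i * z j) := by
      rw [Finset.sum_mul_sum]
      exact Finset.sum_congr rfl fun i _ => Finset.sum_congr rfl fun j _ => by ring
    have e3 : ∑ i, (2 * m * u i) * z i = 2 * m * ∑ i, u i * z i := by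
      rw [Finset.mul_sum]
      exact Finset.sum_congr rfl fun i _ => by ring
    simp only [dotProduct]
    rw [← e2, e3]
    ring
  have IA : Integrable (fun z : Fin n → ℝ => ∑ i, ∑ j, (u i * u j) * (z i * z j)) PP :=
    integrable_finset_sum _ fun i _ => integrable_finset_sum _ fun j _ =>
      (pi_integrable_mul i j).const_mul _
  have IB : Integrable (fun z : Fin n → ℝ => ∑ i, (2 * m * u i) * z i) PP :=
    integrable_finset_sum _ fun i _ => (pi_integrable_single i).const_mul _
  simp only [hexp]
  have IB2 : Integrable (fun z : Fin n → ℝ => (∑ i, (2 * m * u i) * z i) + m ^ 2) PP :=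
    IB.add (integrable_const _)
  rw [integral_add IA IB2, integral_add IB (integrable_const (m ^ 2))]
  have hA : ∫ z, ∑ i, ∑ j, (u i * u j) * (z i * z j) ∂PP = u ⬝ᵥ u := by
    rw [integral_finset_sum _ fun i _ => integrable_finset_sum _ fun j _ =>
      (pi_integrable_mul i j).const_mul _]
    have : ∀ i : Fin n, ∫ z, ∑ j, (u i * u j) * (z i * z j) ∂PP = u i * u i := by
      intro i
      rw [integral_finset_sum _ fun j _ => (pi_integrable_mul i j).const_mul _]
      have : ∀ j : Fin n, ∫ z, (u i * u j) * (z i * z j) ∂PP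
          = (u i * u j) * if i = j then 1 else 0 := fun j => by
        rw [integral_const_mul, pi_integral_mul]
      rw [← hPP]
      simp only [this, mul_ite, mul_one, mul_zero, Finset.sum_ite_eq, Finset.mem_univ, if_true]
    rw [← hPP]
    simp only [this, dotProduct]
  have hB : ∫ z, ∑ i, (2 * m * u i) * z i ∂PP = 0 := by
    rw [integral_finset_sum _ fun i _ => (pi_integrable_single i).const_mul _]
    simp only [integral_const_mul, pi_integral_single, mul_zero, Finset.sum_const_zero]
  rw [hA, hB]
  have : IsProbabilityMeasure PP := by rw [hPP]; infer_instance
  simp [measure_univ]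
lemma transpose_eq_of_isHermitian {n : ℕ} {A : Matrix (Fin n) (Fin n) ℝ}
    (h : A.IsHermitian) : Aᵀ = A := by
  ext i j
  simpa using congrFun (congrFun h i) j

lemma integral_affine {n : ℕ} (μ : Fin n → ℝ) (S : Matrix (Fin n) (Fin n) ℝ)
    (hS : S.PosSemidef) (c : Fin n → ℝ) (b : ℝ) :
    ∫ v, (c ⬝ᵥ v - b) ^ 2 ∂(multiGaussian μ S hS)
      = c ⬝ᵥ S.mulVec c + (c ⬝ᵥ μ - b) ^ 2 := by
  set A := hS.sqrt with hA
  have hAt : Aᵀ = A := transpose_eq_of_isHermitian hS.sqrt_isHermitian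
  have hmeas : Measurable fun z : Fin n → ℝ => μ + A.mulVec z := by
    apply measurable_pi_lambda
    intro i
    simp only [Pi.add_apply, mulVec, dotProduct]
    exact measurable_const.add
      (Finset.measurable_sum _ fun j _ => (measurable_pi_apply j).const_mul _)
  have hsm : Measurable fun v : Fin n → ℝ => (c ⬝ᵥ v - b) ^ 2 := by
    simp only [dotProduct]
    exact ((Finset.measurable_sum _ fun i _ =>
      (measurable_pi_apply i).const_mul _).sub measurable_const).pow_const 2
  rw [multiGaussian, integral_map hmeas.aemeasurable hsm.aestronglyMeasurable]
  have key : ∀ z : Fin n → ℝ, (c ⬝ᵥ (μ + A.mulVec z) - b) ^ 2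
      = ((c ᵥ* A) ⬝ᵥ z + (c ⬝ᵥ μ - b)) ^ 2 := fun z => by
    rw [dotProduct_add, dotProduct_mulVec]; ring
  simp only [key]
  rw [integral_dot_add_sq]
  congr 1
  calc (c ᵥ* A) ⬝ᵥ (c ᵥ* A) = (c ᵥ* A) ⬝ᵥ (Aᵀ *ᵥ c) := by rw [mulVec_transpose]
    _ = (c ᵥ* A) ⬝ᵥ (A *ᵥ c) := by rw [hAt]
    _ = ((c ᵥ* A) ᵥ* A) ⬝ᵥ c := by rw [dotProduct_mulVec]
    _ = (c ᵥ* (A * A)) ⬝ᵥ c := by rw [vecMul_vecMul]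
    _ = (c ᵥ* S) ⬝ᵥ c := by rw [hA, hS.sqrt_mul_self]
    _ = (Sᵀ *ᵥ c) ⬝ᵥ c := by rw [mulVec_transpose]
    _ = (S *ᵥ c) ⬝ᵥ c := by rw [transpose_eq_of_isHermitian hS.1]
    _ = c ⬝ᵥ S *ᵥ c := dotProduct_comm _ _

end RegretAux

lemma mulVec_dot_symm {n : ℕ} {B : Matrix (Fin n) (Fin n) ℝ} (hB : Bᵀ = B)
    (a m : Fin n → ℝ) : (B *ᵥ a) ⬝ᵥ m = a ⬝ᵥ (B *ᵥ m) := by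
  rw [dotProduct_comm, dotProduct_mulVec, ← mulVec_transpose, hB, dotProduct_comm,
    dotProduct_mulVec, ← mulVec_transpose, hB]

lemma dot_sqrt_sqrt {n : ℕ} {S : Matrix (Fin n) (Fin n) ℝ} (hS : S.PosSemidef)
    (x : Fin n → ℝ) : (hS.sqrt *ᵥ x) ⬝ᵥ (hS.sqrt *ᵥ x) = x ⬝ᵥ (S *ᵥ x) := by
  have hAt : hS.sqrtᵀ = hS.sqrt := transpose_eq_of_isHermitian hS.sqrt_isHermitian
  rw [mulVec_dot_symm hAt, mulVec_mulVec, hS.sqrt_mul_self]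

/-- In linear-regression transfer learning with Gaussian data, the regret equals
`‖Σ_{T,X}^{1/2}(w_T − w_S)‖₂² + [μ_{T,Y} − μ_{S,Y} − Σ_{S,YX}Σ_{S,X}^{-1}(μ_{T,X} − μ_{S,X})]²`. -/
theorem regret_eq_gaussian {d : ℕ}
    (μS μT : Fin (d + 1) → ℝ) (ST : Matrix (Fin (d + 1)) (Fin (d + 1)) ℝ) (hST : ST.PosSemidef)
    (μSX μTX : Fin d → ℝ) (hμSX : μSX = fun i => μS i.castSucc)
    (hμTX : μTX = fun i => μT i.castSucc)
    (μSY μTY : ℝ) (hμSY : μSY = μS (Fin.last d)) (hμTY : μTY = μT (Fin.last d))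
    (SSX : Matrix (Fin d) (Fin d) ℝ) (hSSX : SSX.PosDef)
    (STX : Matrix (Fin d) (Fin d) ℝ) (hSTXdef : STX = ST.submatrix Fin.castSucc Fin.castSucc)
    (hSTX : STX.PosDef)
    (SSXY : Fin d → ℝ)
    (STXY : Fin d → ℝ) (hSTXYdef : STXY = fun i => ST i.castSucc (Fin.last d))
    (wS wT : Fin d → ℝ) (hwS : wS = SSX⁻¹.mulVec SSXY) (hwT : wT = STX⁻¹.mulVec STXY)
    (bS bT : ℝ) (hbS : bS = μSY - SSXY ⬝ᵥ SSX⁻¹.mulVec μSX)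
    (hbT : bT = μTY - STXY ⬝ᵥ STX⁻¹.mulVec μTX) :
    (∫ v, (v (Fin.last d) - (wS ⬝ᵥ (fun i => v i.castSucc) + bS)) ^ 2
        ∂(multiGaussian μT ST hST)) -
      (∫ v, (v (Fin.last d) - (wT ⬝ᵥ (fun i => v i.castSucc) + bT)) ^ 2
        ∂(multiGaussian μT ST hST)) =
    (hSTX.posSemidef.sqrt.mulVec (wT - wS)) ⬝ᵥ (hSTX.posSemidef.sqrt.mulVec (wT - wS)) +
      (μTY - μSY - SSXY ⬝ᵥ SSX⁻¹.mulVec (μTX - μSX)) ^ 2 := by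
  have hSTsymm : STᵀ = ST := transpose_eq_of_isHermitian hST.1
  have hSTXsymm : STXᵀ = STX := transpose_eq_of_isHermitian hSTX.posSemidef.1
  have hSSXsymm : SSXᵀ = SSX := transpose_eq_of_isHermitian hSSX.posSemidef.1
  have hSTXinv : (STX⁻¹)ᵀ = STX⁻¹ := by
    rw [Matrix.transpose_nonsing_inv, hSTXsymm]
  have hSSXinv : (SSX⁻¹)ᵀ = SSX⁻¹ := by
    rw [Matrix.transpose_nonsing_inv, hSSXsymm]
  -- rewrite the integrand as (c ⬝ᵥ v - b)^2
  have hc : ∀ (w : Fin d → ℝ) (b : ℝ),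
      (∫ v, (v (Fin.last d) - (w ⬝ᵥ (fun i => v i.castSucc) + b)) ^ 2
        ∂(multiGaussian μT ST hST))
      = ∫ v, ((Fin.snoc (fun i => -w i) 1 : Fin (d+1) → ℝ) ⬝ᵥ v - b) ^ 2
        ∂(multiGaussian μT ST hST) := by
    intro w b
    congr 1
    funext v
    congr 1
    simp only [dotProduct, Fin.sum_univ_castSucc, Fin.snoc_castSucc, Fin.snoc_last, neg_mul,
      one_mul, Finset.sum_neg_distrib]
    ring
  rw [hc wS bS, hc wT bT, integral_affine, integral_affine]
  set cS : Fin (d+1) → ℝ := Fin.snoc (fun i => -wS i) 1 with hcS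
  set cT : Fin (d+1) → ℝ := Fin.snoc (fun i => -wT i) 1 with hcT
  -- mean terms
  have hmean : ∀ w : Fin d → ℝ,
      (Fin.snoc (fun i => -w i) 1 : Fin (d+1) → ℝ) ⬝ᵥ μT
        = μT (Fin.last d) - w ⬝ᵥ μTX := by
    intro w
    simp only [dotProduct, Fin.sum_univ_castSucc, Fin.snoc_castSucc, Fin.snoc_last, neg_mul,
      one_mul, Finset.sum_neg_distrib, hμTX]
    ring
  -- symmetric-inverse swap
  have hswapT : wT ⬝ᵥ μTX = STXY ⬝ᵥ STX⁻¹.mulVec μTX := by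
    rw [hwT, mulVec_dot_symm hSTXinv]
  have hswapS : ∀ a : Fin d → ℝ, wS ⬝ᵥ a = SSXY ⬝ᵥ SSX⁻¹.mulVec a := by
    intro a
    rw [hwS, mulVec_dot_symm hSSXinv]
  have hmT : cT ⬝ᵥ μT - bT = 0 := by
    rw [hcT, hmean wT, hbT, hμTY, hswapT]
    ring
  have hmS : cS ⬝ᵥ μT - bS
      = μTY - μSY - SSXY ⬝ᵥ SSX⁻¹.mulVec (μTX - μSX) := by
    rw [hcS, hmean wS, hbS, hμTY, mulVec_sub, dotProduct_sub, hswapS μTX]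
    ring
  -- quadratic terms
  have hSTXwT : STX *ᵥ wT = STXY := by
    rw [hwT, mulVec_mulVec, Matrix.mul_nonsing_inv _ (isUnit_iff_ne_zero.2 hSTX.det_pos.ne'),
      one_mulVec]
  have hquad : ∀ w : Fin d → ℝ,
      (Fin.snoc (fun i => -w i) 1 : Fin (d+1) → ℝ) ⬝ᵥ
        (ST *ᵥ (Fin.snoc (fun i => -w i) 1 : Fin (d+1) → ℝ))
      = w ⬝ᵥ (STX *ᵥ w) - 2 * (w ⬝ᵥ STXY) + ST (Fin.last d) (Fin.last d) := by
    intro w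
    have hsym : ∀ i : Fin d, ST (Fin.last d) i.castSucc = ST i.castSucc (Fin.last d) := fun i =>
      (congrFun (congrFun hSTsymm (Fin.last d)) i.castSucc).symm
    simp only [dotProduct, mulVec, dotProduct, hSTXdef, hSTXYdef, submatrix_apply,
      Fin.sum_univ_castSucc, Fin.snoc_castSucc, Fin.snoc_last, neg_mul, mul_neg, one_mul,
      mul_one, Finset.sum_neg_distrib, Finset.mul_sum, Finset.sum_add_distrib, hsym]
    have A1 : ∀ x : Fin d, w x * (-∑ y : Fin d, ST x.castSucc y.castSucc * w y
          + ST x.castSucc (Fin.last d))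
        = -(∑ y : Fin d, w x * (ST x.castSucc y.castSucc * w y))
          + w x * ST x.castSucc (Fin.last d) := by
      intro x
      rw [mul_add, mul_neg, Finset.mul_sum]
    have B2 : ∑ x : Fin d, ST x.castSucc (Fin.last d) * w x
        = ∑ x : Fin d, w x * ST x.castSucc (Fin.last d) :=
      Finset.sum_congr rfl fun x _ => mul_comm _ _
    have B1 : ∑ i : Fin d, 2 * (w i * ST i.castSucc (Fin.last d))
        = 2 * ∑ i : Fin d, w i * ST i.castSucc (Fin.last d) := (Finset.mul_sum _ _ _).symm
    simp only [A1, Finset.sum_add_distrib, Finset.sum_neg_distrib, B2, B1]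
    ring
  rw [hquad wS, hquad wT, hmT, hmS, dot_sqrt_sqrt hSTX.posSemidef]
  have hsymW : wS ⬝ᵥ (STX *ᵥ wT) = wT ⬝ᵥ (STX *ᵥ wS) := by
    rw [← mulVec_dot_symm hSTXsymm, dotProduct_comm]
  have hrhs : (wT - wS) ⬝ᵥ (STX *ᵥ (wT - wS))
      = wT ⬝ᵥ (STX *ᵥ wT) - 2 * (wS ⬝ᵥ (STX *ᵥ wT)) + wS ⬝ᵥ (STX *ᵥ wS) := by
    rw [mulVec_sub, dotProduct_sub, sub_dotProduct, sub_dotProduct, hsymW]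
    ring
  have hXY : wS ⬝ᵥ STXY = wS ⬝ᵥ (STX *ᵥ wT) := by rw [hSTXwT]
  have hXY2 : wT ⬝ᵥ STXY = wT ⬝ᵥ (STX *ᵥ wT) := by rw [hSTXwT]
  rw [hrhs, hXY, hXY2]
  ring
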